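/- Let q(s) = Σ_{i=1}^v q_i(s) e^{−h_i s} be a quasi-polynomial with commensurate delays h_i = n_i/N (n_i ∈ ℕ, N a positive integer), and let p be its asymptotic polynomial. Then for every σ₀ ∈ ℝ and every ε > 0 there exists ω* > 0 such that for all ω > ω*, writing s = σ₀ + jω, one has q_1(s) ≠ 0 and | q(s)·e^{h_1 s}/q_1(s) − p(e^{−s/N}) | = | Σ_{i=1}^v ( q_i(s)/q_1(s) − p_i ) e^{−(h_i − h_1)s} | < ε. -/

import Mathlib

open Complex Polynomial Filter

lemma aux_norm_atTop (σ₀ : ℝ) :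
    Tendsto (fun ω : ℝ => ‖(σ₀ : ℂ) + ω * Complex.I‖) atTop atTop := by
  apply tendsto_atTop_mono (fun ω => ?_) tendsto_id
  calc (id ω : ℝ) ≤ |ω| := le_abs_self ω
    _ = |((σ₀ : ℂ) + ω * Complex.I).im| := by simp
    _ ≤ ‖(σ₀ : ℂ) + ω * Complex.I‖ := Complex.abs_im_le_norm _

lemma aux_div_div (a b c : ℂ) (hc : c ≠ 0) : a / c / (b / c) = a / b := by
  rcases eq_or_ne b 0 with hb | hb
  · simp [hb]
  · field_simp

lemma aux_tendsto_div_pow (σ₀ : ℝ) (d : ℕ) (A : Polynomial ℝ) (hA : A.natDegree ≤ d) :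
    Tendsto (fun ω : ℝ =>
        Polynomial.aeval ((σ₀ : ℂ) + ω * Complex.I) A / ((σ₀ : ℂ) + ω * Complex.I) ^ d)
      atTop (nhds ((A.coeff d : ℂ))) := by
  set s : ℝ → ℂ := fun ω => (σ₀ : ℂ) + ω * Complex.I with hs
  have hne : ∀ᶠ ω : ℝ in atTop, s ω ≠ 0 := by
    filter_upwards [eventually_gt_atTop 0] with ω hω hcon
    have : (s ω).im = 0 := by rw [hcon]; simp
    simp [hs] at this; linarith
  have hsum : ∀ ω : ℝ, Polynomial.aeval (s ω) A
      = ∑ k ∈ Finset.range (d + 1), (A.coeff k : ℂ) * (s ω) ^ k := by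
    intro ω
    rw [Polynomial.aeval_eq_sum_range' (lt_of_le_of_lt hA (Nat.lt_succ_self d))]
    simp [Algebra.smul_def]
  have hlim : Tendsto (fun ω => ∑ k ∈ Finset.range (d + 1),
      (A.coeff k : ℂ) * ((s ω) ^ k / (s ω) ^ d)) atTop (nhds ((A.coeff d : ℂ))) := by
    have : ((A.coeff d : ℂ)) = ∑ k ∈ Finset.range (d + 1),
        (A.coeff k : ℂ) * (if k = d then (1:ℂ) else 0) := by
      simp
    rw [this]
    apply tendsto_finset_sum
    intro k hk
    apply Tendsto.const_mul
    rcases eq_or_lt_of_le (Nat.lt_succ_iff.mp (Finset.mem_range.mp hk)) with hkd | hkd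
    · subst hkd
      simp only [if_pos rfl]
      apply Tendsto.congr' _ tendsto_const_nhds
      filter_upwards [hne] with ω hω
      rw [div_self (pow_ne_zero _ hω)]
      simp
    · simp only [if_neg (Nat.ne_of_lt hkd)]
      apply squeeze_zero_norm (a := fun ω => ‖s ω‖ ^ k / ‖s ω‖ ^ d)
      · intro ω; simp [norm_div, norm_pow]
      · exact (tendsto_pow_div_pow_atTop_zero hkd).comp (aux_norm_atTop σ₀)
  apply hlim.congr
  intro ω
  rw [hsum, Finset.sum_div]
  exact Finset.sum_congr rfl fun k _ => by rw [mul_div_assoc]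

theorem quasipolynomial_asymptotic_estimate
    (v : ℕ)
    (Q : Fin (v + 1) → Polynomial ℝ) (hQne : ∀ i, Q i ≠ 0)
    (hQdeg : ∀ i, (Q i).natDegree ≤ (Q 0).natDegree)
    (n : Fin (v + 1) → ℕ) (hnmono : StrictMono n)
    (N : ℕ) (hN : 0 < N)
    (h : Fin (v + 1) → ℝ) (hdelay : ∀ i, h i = (n i : ℝ) / N)
    (q : ℂ → ℂ)
    (hq : ∀ s : ℂ, q s = ∑ i, (Polynomial.aeval s (Q i)) * Complex.exp (-(h i : ℂ) * s))
    (p : Fin (v + 1) → ℝ)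
    (hp : ∀ i, p i = (Q i).coeff ((Q 0).natDegree) / (Q 0).leadingCoeff)
    (P : ℂ → ℂ)
    (hP : ∀ x : ℂ, P x = ∑ i, (p i : ℂ) * x ^ (n i - n 0)) :
    ∀ σ₀ : ℝ, ∀ ε > (0 : ℝ), ∃ ωst > (0 : ℝ), ∀ ω > ωst,
      Polynomial.aeval ((σ₀ : ℂ) + ω * Complex.I) (Q 0) ≠ 0 ∧
      (q ((σ₀ : ℂ) + ω * Complex.I) * Complex.exp ((h 0 : ℂ) * ((σ₀ : ℂ) + ω * Complex.I))
          / Polynomial.aeval ((σ₀ : ℂ) + ω * Complex.I) (Q 0)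
        - P (Complex.exp (-((σ₀ : ℂ) + ω * Complex.I) / N))
        = ∑ i, (Polynomial.aeval ((σ₀ : ℂ) + ω * Complex.I) (Q i)
                  / Polynomial.aeval ((σ₀ : ℂ) + ω * Complex.I) (Q 0) - (p i : ℂ))
              * Complex.exp (-((h i : ℂ) - (h 0 : ℂ)) * ((σ₀ : ℂ) + ω * Complex.I))) ∧
      ‖(q ((σ₀ : ℂ) + ω * Complex.I) * Complex.exp ((h 0 : ℂ) * ((σ₀ : ℂ) + ω * Complex.I))
            / Polynomial.aeval ((σ₀ : ℂ) + ω * Complex.I) (Q 0)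
          - P (Complex.exp (-((σ₀ : ℂ) + ω * Complex.I) / N)))‖ < ε := by
  intro σ₀ ε hε
  set d := (Q 0).natDegree with hd
  set s : ℝ → ℂ := fun ω => (σ₀ : ℂ) + ω * Complex.I with hs
  have hNc : (N : ℂ) ≠ 0 := Nat.cast_ne_zero.mpr hN.ne'
  have hlead : ((Q 0).leadingCoeff : ℂ) ≠ 0 := by
    exact_mod_cast fun hc => hQne 0 (Polynomial.leadingCoeff_eq_zero.mp (by exact_mod_cast hc))
  have hsne : ∀ᶠ ω : ℝ in atTop, s ω ≠ 0 := by
    filter_upwards [eventually_gt_atTop 0] with ω hω hcon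
    have : (s ω).im = 0 := by rw [hcon]; simp
    simp [hs] at this; linarith
  have hQ0lim : Tendsto (fun ω : ℝ => Polynomial.aeval (s ω) (Q 0) / (s ω) ^ d)
      atTop (nhds (((Q 0).leadingCoeff : ℂ))) := by
    have h0 : ((Q 0).leadingCoeff : ℂ) = ((Q 0).coeff d : ℂ) := rfl
    rw [h0]
    exact aux_tendsto_div_pow σ₀ d (Q 0) le_rfl
  have hne : ∀ᶠ ω : ℝ in atTop, Polynomial.aeval (s ω) (Q 0) ≠ 0 := by
    filter_upwards [hQ0lim.eventually_ne hlead] with ω hω hcon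
    exact hω (by rw [hcon, zero_div])
  -- convergence of the ratios
  have hratio : ∀ i, Tendsto (fun ω : ℝ =>
      Polynomial.aeval (s ω) (Q i) / Polynomial.aeval (s ω) (Q 0)) atTop (nhds ((p i : ℂ))) := by
    intro i
    have h1 := (aux_tendsto_div_pow σ₀ d (Q i) (hQdeg i)).div hQ0lim hlead
    have h2 : ((p i : ℂ)) = ((Q i).coeff d : ℂ) / ((Q 0).leadingCoeff : ℂ) := by
      rw [hp i]; push_cast; rfl
    rw [h2]
    apply h1.congr'
    filter_upwards [hsne] with ω hω
    exact aux_div_div _ _ _ (pow_ne_zero _ hω)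
  have hdiff : ∀ i, Tendsto (fun ω : ℝ =>
      Polynomial.aeval (s ω) (Q i) / Polynomial.aeval (s ω) (Q 0) - (p i : ℂ))
      atTop (nhds 0) := by
    intro i
    simpa using (hratio i).sub_const ((p i : ℂ))
  -- the sum tends to 0
  have hsum : Tendsto (fun ω : ℝ => ∑ i,
      (Polynomial.aeval (s ω) (Q i) / Polynomial.aeval (s ω) (Q 0) - (p i : ℂ))
        * Complex.exp (-((h i : ℂ) - (h 0 : ℂ)) * s ω)) atTop (nhds 0) := by
    have : (0 : ℂ) = ∑ i : Fin (v + 1), (0 : ℂ) := by simp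
    rw [this]
    apply tendsto_finset_sum
    intro i _
    apply squeeze_zero_norm (a := fun ω =>
      ‖Polynomial.aeval (s ω) (Q i) / Polynomial.aeval (s ω) (Q 0) - (p i : ℂ)‖
        * Real.exp (-(h i - h 0) * σ₀))
    · intro ω
      rw [norm_mul]
      apply le_of_eq
      congr 1
      rw [Complex.norm_exp]
      congr 1
      simp [hs]
    · have := ((hdiff i).norm).mul_const (Real.exp (-(h i - h 0) * σ₀))
      simpa using this
  have hlt : ∀ᶠ ω : ℝ in atTop, ‖(∑ i,
      (Polynomial.aeval (s ω) (Q i) / Polynomial.aeval (s ω) (Q 0) - (p i : ℂ))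
        * Complex.exp (-((h i : ℂ) - (h 0 : ℂ)) * s ω))‖ < ε := by
    have := hsum.norm
    rw [norm_zero] at this
    filter_upwards [this.eventually_lt_const hε] with ω hω
    simpa using hω
  -- the algebraic identity
  have hid : ∀ ω : ℝ, Polynomial.aeval (s ω) (Q 0) ≠ 0 →
      q (s ω) * Complex.exp ((h 0 : ℂ) * s ω) / Polynomial.aeval (s ω) (Q 0)
        - P (Complex.exp (-(s ω) / N))
      = ∑ i, (Polynomial.aeval (s ω) (Q i) / Polynomial.aeval (s ω) (Q 0) - (p i : ℂ))
          * Complex.exp (-((h i : ℂ) - (h 0 : ℂ)) * s ω) := by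
    intro ω hQ0
    have hexp : ∀ i : Fin (v + 1),
        Complex.exp (-(s ω) / N) ^ (n i - n 0) = Complex.exp (-((h i : ℂ) - (h 0 : ℂ)) * s ω) := by
      intro i
      rw [← Complex.exp_nat_mul]
      congr 1
      have hsub : ((n i - n 0 : ℕ) : ℂ) = (n i : ℂ) - (n 0 : ℂ) := by
        have : n 0 ≤ n i := hnmono.monotone (Fin.zero_le i)
        push_cast [Nat.cast_sub this]; ring
      have hhi : ((h i : ℝ) : ℂ) = (n i : ℂ) / N := by rw [hdelay i]; push_cast; ring
      have hh0 : ((h 0 : ℝ) : ℂ) = (n 0 : ℂ) / N := by rw [hdelay 0]; push_cast; ring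
      rw [hsub, hhi, hh0]
      field_simp
    rw [hq, hP]
    have h1 : (∑ i, Polynomial.aeval (s ω) (Q i) * Complex.exp (-((h i : ℝ) : ℂ) * s ω))
        * Complex.exp ((h 0 : ℂ) * s ω) / Polynomial.aeval (s ω) (Q 0)
      = ∑ i, (Polynomial.aeval (s ω) (Q i) / Polynomial.aeval (s ω) (Q 0))
          * Complex.exp (-((h i : ℂ) - (h 0 : ℂ)) * s ω) := by
      rw [Finset.sum_mul, Finset.sum_div]
      apply Finset.sum_congr rfl
      intro i _
      rw [mul_assoc, ← Complex.exp_add, mul_div_right_comm]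
      congr 2
      ring
    rw [h1]
    rw [← Finset.sum_sub_distrib]
    apply Finset.sum_congr rfl
    intro i _
    rw [hexp i, sub_mul]
  -- assemble
  obtain ⟨b, hb⟩ := eventually_atTop.mp (hne.and hlt)
  refine ⟨max b 1, lt_of_lt_of_le one_pos (le_max_right _ _), fun ω hω => ?_⟩
  have hωb : b ≤ ω := le_of_lt (lt_of_le_of_lt (le_max_left b 1) hω)
  obtain ⟨hne', hlt'⟩ := hb ω hωb
  refine ⟨hne', hid ω hne', ?_⟩
  rw [hid ω hne']
  exact hlt'
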